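/- For an ensemble of two qubit states {(p, ρ⁽¹⁾), (1−p, ρ⁽²⁾)} with Bloch vectors r⃗₁, r⃗₂, the minimum over projective measurement directions v̂ of ½[p‖r⃗₁‖|sin ∠(v̂,r⃗₁)| + (1−p)‖r⃗₂‖|sin ∠(v̂,r⃗₂)|] equals ½ |sin ∠(r⃗₁, r⃗₂)| · min{p‖r⃗₁‖, (1−p)‖r⃗₂‖}. -/

import Mathlib

open scoped RealInnerProductSpace
open InnerProductGeometry Real

private lemma trig_key (sa ca sb cb sc cc : ℝ) (hsa : 0 ≤ sa) (hsb : 0 ≤ sb)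
    (ha : sa^2 + ca^2 = 1) (hb : sb^2 + cb^2 = 1) (hc : sc^2 + cc^2 = 1)
    (h1 : ca*cb - sa*sb ≤ cc) (h2 : cc ≤ ca*cb + sa*sb) : sc ≤ sa + sb := by
  have hab : 0 ≤ sa * sb := mul_nonneg hsa hsb
  rcases le_or_gt (ca*cb - sa*sb) 0 with hl | hl
  · rcases le_or_gt 0 (ca*cb + sa*sb) with hr | hr
    · nlinarith [sq_nonneg (sa*sb - ca*cb), sq_nonneg (sa*sb + ca*cb), sq_nonneg (sa+sb), sq_nonneg cc, sq_nonneg sc, sq_nonneg (sa - sb)]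
    · have key : cc^2 ≥ (ca*cb + sa*sb)^2 := by nlinarith [mul_nonneg (by linarith : (0:ℝ) ≤ -(cc - (ca*cb+sa*sb))) (by linarith : (0:ℝ) ≤ -(cc + (ca*cb+sa*sb)))]
      nlinarith [sq_nonneg (sa*cb - sb*ca), sq_nonneg (sa*cb + sb*ca), mul_nonneg hab (by nlinarith [sq_nonneg (ca+cb), sq_nonneg (ca-cb)] : (0:ℝ) ≤ 1 + ca*cb), sq_nonneg (sa+sb)]
  · have key : cc^2 ≥ (ca*cb - sa*sb)^2 := by nlinarith [mul_nonneg (by linarith : (0:ℝ) ≤ cc - (ca*cb-sa*sb)) (by linarith : (0:ℝ) ≤ cc + (ca*cb-sa*sb))]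
    nlinarith [sq_nonneg (sa*cb - sb*ca), sq_nonneg (sa*cb + sb*ca), mul_nonneg hab (by nlinarith [sq_nonneg (ca+cb), sq_nonneg (ca-cb)] : (0:ℝ) ≤ 1 - ca*cb), sq_nonneg (sa+sb)]

variable {E : Type*} [NormedAddCommGroup E] [InnerProductSpace ℝ E]

private lemma sin_angle_nonneg (x y : E) : 0 ≤ Real.sin (angle x y) :=
  Real.sin_nonneg_of_nonneg_of_le_pi (angle_nonneg x y) (angle_le_pi x y)

private lemma sin_sq_angle (x y : E) :
    Real.sin (angle x y) ^ 2 + Real.cos (angle x y) ^ 2 = 1 :=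
  Real.sin_sq_add_cos_sq _

private lemma cos_angle_unit {x y : E} (hx : ‖x‖ = 1) (hy : ‖y‖ = 1) :
    Real.cos (angle x y) = ⟪x, y⟫ := by
  rw [cos_angle, hx, hy]; simp

private lemma sin_angle_unit {x y : E} (hx : ‖x‖ = 1) (hy : ‖y‖ = 1) :
    Real.sin (angle x y) = Real.sqrt (1 - ⟪x, y⟫^2) := by
  rw [Real.sin_eq_sqrt_one_sub_cos_sq (angle_nonneg x y) (angle_le_pi x y),
    cos_angle_unit hx hy]

private lemma sin_angle_triangle_unit (u x y : E) (hu : ‖u‖ = 1) (hx : ‖x‖ = 1)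
    (hy : ‖y‖ = 1) :
    Real.sin (angle x y) ≤ Real.sin (angle u x) + Real.sin (angle u y) := by
  set ca : ℝ := ⟪u, x⟫ with hca
  set cb : ℝ := ⟪u, y⟫ with hcb
  have hu2 : ⟪u, u⟫ = (1:ℝ) := by rw [real_inner_self_eq_norm_sq, hu]; norm_num
  have hx2 : ⟪x, x⟫ = (1:ℝ) := by rw [real_inner_self_eq_norm_sq, hx]; norm_num
  have hy2 : ⟪y, y⟫ = (1:ℝ) := by rw [real_inner_self_eq_norm_sq, hy]; norm_num
  have hxu : ⟪x, u⟫ = ca := (real_inner_comm x u).symm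
  have hyu : ⟪y, u⟫ = cb := (real_inner_comm y u).symm
  have e1 : ⟪x - ca • u, y - cb • u⟫ = ⟪x, y⟫ - ca * cb := by
    simp only [inner_sub_left, inner_sub_right, real_inner_smul_left, real_inner_smul_right,
      hu2, hxu, hyu, ← hca, ← hcb]
    ring
  have n1 : ‖x - ca • u‖ = Real.sqrt (1 - ca^2) := by
    rw [← Real.sqrt_sq (norm_nonneg _)]
    congr 1
    rw [← real_inner_self_eq_norm_sq]
    simp only [inner_sub_left, inner_sub_right, real_inner_smul_left, real_inner_smul_right,
      hu2, hx2, hxu, ← hca]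
    ring
  have n2 : ‖y - cb • u‖ = Real.sqrt (1 - cb^2) := by
    rw [← Real.sqrt_sq (norm_nonneg _)]
    congr 1
    rw [← real_inner_self_eq_norm_sq]
    simp only [inner_sub_left, inner_sub_right, real_inner_smul_left, real_inner_smul_right,
      hu2, hy2, hyu, ← hcb]
    ring
  have key : |⟪x, y⟫ - ca * cb| ≤ Real.sqrt (1 - ca^2) * Real.sqrt (1 - cb^2) := by
    rw [← e1, ← n1, ← n2]; exact abs_real_inner_le_norm _ _
  have hsa : Real.sin (angle u x) = Real.sqrt (1 - ca^2) := sin_angle_unit hu hx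
  have hsb : Real.sin (angle u y) = Real.sqrt (1 - cb^2) := sin_angle_unit hu hy
  have hcc : Real.cos (angle x y) = ⟪x, y⟫ := cos_angle_unit hx hy
  have hcau : Real.cos (angle u x) = ca := cos_angle_unit hu hx
  have hcbu : Real.cos (angle u y) = cb := cos_angle_unit hu hy
  rcases abs_le.1 key with ⟨k1, k2⟩
  have t1 := sin_sq_angle u x; rw [hcau] at t1
  have t2 := sin_sq_angle u y; rw [hcbu] at t2
  have t3 := sin_sq_angle x y; rw [hcc] at t3
  exact trig_key _ ca _ cb _ (⟪x, y⟫) (_root_.sin_angle_nonneg u x) (_root_.sin_angle_nonneg u y)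
    t1 t2 t3 (by rw [hsa, hsb]; linarith) (by rw [hsa, hsb]; linarith)

private lemma sin_angle_triangle (u x y : E) (hu : ‖u‖ = 1) :
    Real.sin (angle x y) ≤ Real.sin (angle u x) + Real.sin (angle u y) := by
  rcases eq_or_ne x 0 with rfl | hx
  · rw [angle_zero_left, angle_zero_right]
    simp
    exact _root_.sin_angle_nonneg u y
  rcases eq_or_ne y 0 with rfl | hy
  · rw [angle_zero_right (x := x), angle_zero_right (x := u)]
    simp
    exact _root_.sin_angle_nonneg u x
  have hx' : (0:ℝ) < ‖x‖⁻¹ := inv_pos.2 (norm_pos_iff.2 hx)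
  have hy' : (0:ℝ) < ‖y‖⁻¹ := inv_pos.2 (norm_pos_iff.2 hy)
  have e1 : angle x y = angle (‖x‖⁻¹ • x) (‖y‖⁻¹ • y) := by
    rw [angle_smul_left_of_pos _ _ hx', angle_smul_right_of_pos _ _ hy']
  have e2 : angle u x = angle u (‖x‖⁻¹ • x) := by
    rw [angle_smul_right_of_pos _ _ hx']
  have e3 : angle u y = angle u (‖y‖⁻¹ • y) := by
    rw [angle_smul_right_of_pos _ _ hy']
  rw [e1, e2, e3]
  exact sin_angle_triangle_unit u _ _ hu (norm_smul_inv_norm hx) (norm_smul_inv_norm hy)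

theorem two_qubit_ensemble_quantumness (p : ℝ) (hp : p ∈ Set.Icc (0 : ℝ) 1)
    (r₁ r₂ : EuclideanSpace ℝ (Fin 3)) (h1 : ‖r₁‖ ≤ 1) (h2 : ‖r₂‖ ≤ 1) :
    IsLeast
      {x : ℝ | ∃ v : EuclideanSpace ℝ (Fin 3), ‖v‖ = 1 ∧
        x = (1 / 2) * (p * ‖r₁‖ * |Real.sin (InnerProductGeometry.angle v r₁)| +
             (1 - p) * ‖r₂‖ * |Real.sin (InnerProductGeometry.angle v r₂)|)}
      ((1 / 2) * |Real.sin (InnerProductGeometry.angle r₁ r₂)| *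
        min (p * ‖r₁‖) ((1 - p) * ‖r₂‖)) := by
  obtain ⟨hp0, hp1⟩ := hp
  have ha0 : 0 ≤ p * ‖r₁‖ := mul_nonneg hp0 (norm_nonneg _)
  have hb0 : 0 ≤ (1 - p) * ‖r₂‖ := mul_nonneg (by linarith) (norm_nonneg _)
  constructor
  · -- membership
    rcases le_total (p * ‖r₁‖) ((1 - p) * ‖r₂‖) with hmin | hmin
    · rw [min_eq_left hmin]
      rcases eq_or_ne r₂ 0 with rfl | hr₂
      · -- r₂ = 0 : min = 0 = target, any unit vector works since p‖r₁‖ = 0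
        have ha : p * ‖r₁‖ = 0 := le_antisymm (by simpa using hmin) ha0
        refine ⟨EuclideanSpace.single 0 1, ?_, ?_⟩
        · simp [EuclideanSpace.norm_single]
        · simp [ha]
      · refine ⟨‖r₂‖⁻¹ • r₂, norm_smul_inv_norm hr₂, ?_⟩
        have hpos : (0:ℝ) < ‖r₂‖⁻¹ := inv_pos.2 (norm_pos_iff.2 hr₂)
        have e1 : angle (‖r₂‖⁻¹ • r₂) r₂ = 0 := by
          rw [angle_smul_left_of_pos _ _ hpos, angle_self hr₂]
        have e2 : angle (‖r₂‖⁻¹ • r₂) r₁ = angle r₁ r₂ := by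
          rw [angle_smul_left_of_pos _ _ hpos, angle_comm]
        rw [e1, e2]
        simp
        ring
    · rw [min_eq_right hmin]
      rcases eq_or_ne r₁ 0 with rfl | hr₁
      · have hb : (1 - p) * ‖r₂‖ = 0 := le_antisymm (by simpa using hmin) hb0
        refine ⟨EuclideanSpace.single 0 1, ?_, ?_⟩
        · simp [EuclideanSpace.norm_single]
        · simp [hb]
      · refine ⟨‖r₁‖⁻¹ • r₁, norm_smul_inv_norm hr₁, ?_⟩
        have hpos : (0:ℝ) < ‖r₁‖⁻¹ := inv_pos.2 (norm_pos_iff.2 hr₁)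
        have e1 : angle (‖r₁‖⁻¹ • r₁) r₁ = 0 := by
          rw [angle_smul_left_of_pos _ _ hpos, angle_self hr₁]
        have e2 : angle (‖r₁‖⁻¹ • r₁) r₂ = angle r₁ r₂ := by
          rw [angle_smul_left_of_pos _ _ hpos]
        rw [e1, e2]
        simp
        ring
  · -- lower bound
    rintro x ⟨v, hv, rfl⟩
    have tri := sin_angle_triangle v r₁ r₂ hv
    have sA := _root_.sin_angle_nonneg v r₁
    have sB := _root_.sin_angle_nonneg v r₂
    have sC := _root_.sin_angle_nonneg r₁ r₂
    rw [abs_of_nonneg sA, abs_of_nonneg sB, abs_of_nonneg sC]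
    have m1 : min (p * ‖r₁‖) ((1 - p) * ‖r₂‖) * Real.sin (angle v r₁) ≤
        p * ‖r₁‖ * Real.sin (angle v r₁) :=
      mul_le_mul_of_nonneg_right (min_le_left _ _) sA
    have m2 : min (p * ‖r₁‖) ((1 - p) * ‖r₂‖) * Real.sin (angle v r₂) ≤
        (1 - p) * ‖r₂‖ * Real.sin (angle v r₂) :=
      mul_le_mul_of_nonneg_right (min_le_right _ _) sB
    have hm0 : 0 ≤ min (p * ‖r₁‖) ((1 - p) * ‖r₂‖) := le_min ha0 hb0
    nlinarith [mul_le_mul_of_nonneg_left tri hm0]
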